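/- Let n ≥ 2, 1 ≤ k ≤ n−1, and δ₀ ∈ (0,1). There exists a constant c'_{n,k} > 0 depending only on n and k with the following property. Let λ₁ ≥ λ₂ ≥ … ≥ λ_n > 0, set κ_α = 1/λ_α, and let ξ₁,…,ξ_n ∈ ℝ satisfy |ξ_α/λ_α| < δ₀·|ξ₁/λ₁| for every α ≥ 2. Then (1/(2σ_k(κ)))·Σ_{α≠β} (σ_{k−1}(κ|αβ)² − σ_k(κ|αβ)·σ_{k−2}(κ|αβ))·κ_α κ_β·(κ_α ξ_α − κ_β ξ_β)² ≥ c'_{n,k}·(1−δ₀)²·σ_{k−1}(κ|1)·κ₁³·ξ₁². -/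

import Mathlib

set_option maxHeartbeats 1000000
set_option linter.unusedSectionVars false


open scoped Classical

noncomputable section

/-- The `j`-th elementary symmetric function of the family `κ` restricted to the
finite index set `s`; it is `1` for `j = 0`, and `0` for `j < 0` (or for `j`
larger than the cardinality of `s`). -/
def sigmaE {ι : Type*} (s : Finset ι) (j : ℤ) (κ : ι → ℝ) : ℝ :=
  if 0 ≤ j then ∑ t ∈ s.powersetCard j.toNat, ∏ i ∈ t, κ i else 0

/-- `σ_j(κ)`, the `j`-th elementary symmetric polynomial evaluated at `κ`. -/
def sigmaV {ι : Type*} [Fintype ι] (j : ℤ) (κ : ι → ℝ) : ℝ :=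
  sigmaE Finset.univ j κ

/-- `σ_j(κ|α)`: `σ_j` of `κ` with the `α`-th entry deleted. -/
def sigmaV1 {ι : Type*} [Fintype ι] [DecidableEq ι] (j : ℤ) (κ : ι → ℝ) (α : ι) : ℝ :=
  sigmaE (Finset.univ.erase α) j κ

/-- `σ_j(κ|αβ)`: `σ_j` of `κ` with the `α`-th and `β`-th entries deleted. -/
def sigmaV2 {ι : Type*} [Fintype ι] [DecidableEq ι] (j : ℤ) (κ : ι → ℝ) (α β : ι) : ℝ :=
  sigmaE ((Finset.univ.erase α).erase β) j κ

/-- `σ_j(A)` for a real `n × n` matrix `A`: the `j`-th elementary symmetric function of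
the eigenvalues of `A` when `A` is symmetric (= Hermitian over `ℝ`), junk value `0`
otherwise. -/
def sigmaMat {n : ℕ} (j : ℤ) (A : Matrix (Fin n) (Fin n) ℝ) : ℝ :=
  if h : A.IsHermitian then sigmaV j h.eigenvalues else 0

/-- The Hessian quotient operator `F(A) = σ_n(A)/σ_{n-k}(A)`. -/
def Fquot {n : ℕ} (k : ℕ) (A : Matrix (Fin n) (Fin n) ℝ) : ℝ :=
  sigmaMat (n : ℤ) A / sigmaMat ((n : ℤ) - (k : ℤ)) A

open Finset

namespace SAux
variable {ι : Type*} [DecidableEq ι]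

def e (s : Finset ι) (j : ℕ) (κ : ι → ℝ) : ℝ := ∑ t ∈ s.powersetCard j, ∏ i ∈ t, κ i

variable {κ : ι → ℝ}

lemma e_zero (s : Finset ι) : e s 0 κ = 1 := by
  simp [e, Finset.powersetCard_zero]

lemma e_of_card_lt {s : Finset ι} {j : ℕ} (h : s.card < j) : e s j κ = 0 := by
  simp [e, Finset.powersetCard_eq_empty.2 h]

lemma e_empty {j : ℕ} : e (∅ : Finset ι) (j+1) κ = 0 :=
  e_of_card_lt (by simp)

lemma e_insert {s : Finset ι} {a : ι} (h : a ∉ s) (j : ℕ) :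
    e (insert a s) (j+1) κ = e s (j+1) κ + κ a * e s j κ := by
  rw [e, Finset.powersetCard_succ_insert h, Finset.sum_union, Finset.sum_image]
  · congr 1
    rw [e, Finset.mul_sum]
    refine Finset.sum_congr rfl fun t ht => ?_
    rw [Finset.prod_insert]
    exact fun hat => h ((Finset.mem_powersetCard.1 ht).1 hat)
  · intro t ht u hu htu
    have hta : a ∉ t := fun hat => h ((Finset.mem_powersetCard.1 ht).1 hat)
    have hua : a ∉ u := fun hau => h ((Finset.mem_powersetCard.1 hu).1 hau)
    have := congrArg (fun v => Finset.erase v a) htu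
    simpa [Finset.erase_insert hta, Finset.erase_insert hua] using this
  · rw [Finset.disjoint_right]
    intro t ht ht'
    obtain ⟨u, hu, rfl⟩ := Finset.mem_image.1 ht
    exact h ((Finset.mem_powersetCard.1 ht').1 (Finset.mem_insert_self a u))

lemma e_one (s : Finset ι) : e s 1 κ = ∑ a ∈ s, κ a := by
  induction s using Finset.induction with
  | empty => simp [e_empty]
  | @insert a s h ih => rw [e_insert h 0, ih, e_zero, Finset.sum_insert h]; ring

lemma e_nonneg {s : Finset ι} (hκ : ∀ i ∈ s, 0 ≤ κ i) (j : ℕ) : 0 ≤ e s j κ := by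
  refine Finset.sum_nonneg fun t ht => Finset.prod_nonneg fun i hi => ?_
  exact hκ i ((Finset.mem_powersetCard.1 ht).1 hi)

lemma e_pos {s : Finset ι} (hκ : ∀ i ∈ s, 0 < κ i) {j : ℕ} (hj : j ≤ s.card) :
    0 < e s j κ := by
  obtain ⟨t, hts, htc⟩ := Finset.exists_subset_card_eq hj
  refine Finset.sum_pos' (fun u hu => Finset.prod_nonneg fun i hi =>
    (hκ i ((Finset.mem_powersetCard.1 hu).1 hi)).le) ⟨t, ?_, ?_⟩
  · exact Finset.mem_powersetCard.2 ⟨hts, htc⟩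
  · exact Finset.prod_pos fun i hi => hκ i (hts hi)

lemma e_mono_subset {s t : Finset ι} (hts : t ⊆ s) (hκ : ∀ i ∈ s, 0 ≤ κ i) (j : ℕ) :
    e t j κ ≤ e s j κ := by
  refine Finset.sum_le_sum_of_subset_of_nonneg (Finset.powersetCard_mono hts)
    fun u hu _ => Finset.prod_nonneg fun i hi => hκ i ((Finset.mem_powersetCard.1 hu).1 hi)

lemma e_eq_zero_succ {s : Finset ι} (hκ : ∀ i ∈ s, 0 ≤ κ i) :
    ∀ j : ℕ, e s j κ = 0 → e s (j+1) κ = 0 := by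
  induction s using Finset.induction with
  | empty => intro j _; exact e_empty
  | @insert a s h ih =>
    intro j hj
    have hκs : ∀ i ∈ s, 0 ≤ κ i := fun i hi => hκ i (Finset.mem_insert_of_mem hi)
    have hκa : 0 ≤ κ a := hκ a (Finset.mem_insert_self a s)
    match j with
    | 0 => rw [e_zero] at hj; norm_num at hj
    | j+1 =>
      rw [e_insert h j] at hj
      have h1 : e s (j+1) κ = 0 ∧ κ a * e s j κ = 0 := by
        constructor <;> nlinarith [e_nonneg hκs (j+1), e_nonneg hκs j,
          mul_nonneg hκa (e_nonneg hκs j)]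
      rw [e_insert h (j+1), ih hκs (j+1) h1.1]
      have : κ a * e s (j+1) κ = 0 := by
        rcases mul_eq_zero.1 h1.2 with h' | h'
        · rw [h', zero_mul]
        · rw [ih hκs j h', mul_zero]
      rw [this, add_zero]

lemma sum_kappa_erase (s : Finset ι) :
    ∀ j : ℕ, ∑ a ∈ s, κ a * e (s.erase a) j κ = (j+1) * e s (j+1) κ := by
  induction s using Finset.induction with
  | empty => intro j; simp [e_empty]
  | @insert b U h ih =>
    intro j
    rw [Finset.sum_insert h, Finset.erase_insert h]
    have hsplit : ∀ a ∈ U, (insert b U).erase a = insert b (U.erase a) := fun a ha =>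
      Finset.erase_insert_of_ne (fun hba => h (hba ▸ ha))
    match j with
    | 0 =>
      have : ∑ a ∈ U, κ a * e ((insert b U).erase a) 0 κ = ∑ a ∈ U, κ a := by
        refine Finset.sum_congr rfl fun a ha => by rw [e_zero, mul_one]
      rw [this, e_zero, e_one]
      rw [Finset.sum_insert h]; push_cast; ring
    | j+1 =>
      have : ∑ a ∈ U, κ a * e ((insert b U).erase a) (j+1) κ
          = ∑ a ∈ U, (κ a * e (U.erase a) (j+1) κ + κ b * (κ a * e (U.erase a) j κ)) := by
        refine Finset.sum_congr rfl fun a ha => ?_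
        rw [hsplit a ha, e_insert (fun hb => h (Finset.mem_of_mem_erase hb)) j]; ring
      rw [this, Finset.sum_add_distrib, ← Finset.mul_sum, ih (j+1), ih j,
        e_insert h (j+1)]
      push_cast; ring

lemma sum_erase (s : Finset ι) :
    ∀ j : ℕ, ∑ a ∈ s, e (s.erase a) j κ = ((s.card : ℝ) - j) * e s j κ := by
  induction s using Finset.induction with
  | empty => intro j; match j with
             | 0 => simp [e_zero]
             | j+1 => simp [e_empty]
  | @insert b U h ih =>
    intro j
    rw [Finset.sum_insert h, Finset.erase_insert h, Finset.card_insert_of_notMem h]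
    have hsplit : ∀ a ∈ U, (insert b U).erase a = insert b (U.erase a) := fun a ha =>
      Finset.erase_insert_of_ne (fun hba => h (hba ▸ ha))
    match j with
    | 0 =>
      simp only [e_zero, Finset.sum_const, nsmul_eq_mul]
      push_cast; ring
    | j+1 =>
      have : ∑ a ∈ U, e ((insert b U).erase a) (j+1) κ
          = ∑ a ∈ U, (e (U.erase a) (j+1) κ + κ b * e (U.erase a) j κ) := by
        refine Finset.sum_congr rfl fun a ha => ?_
        rw [hsplit a ha, e_insert (fun hb => h (Finset.mem_of_mem_erase hb)) j]
      rw [this, Finset.sum_add_distrib, ← Finset.mul_sum, ih (j+1), ih j,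
        e_insert h j]
      push_cast; ring


def gam : ℕ → ℝ
  | 0 => 0
  | m+1 => (1 + gam m ^ 2) / 2

lemma gam_nonneg (m : ℕ) : 0 ≤ gam m := by
  cases m with
  | zero => simp [gam]
  | succ m => simp only [gam]; nlinarith [sq_nonneg (gam m)]

lemma gam_lt_one (m : ℕ) : gam m < 1 := by
  induction m with
  | zero => norm_num [gam]
  | succ m ih => simp only [gam]; nlinarith [gam_nonneg m]

lemma gam_mono : Monotone gam := by
  refine monotone_nat_of_le_succ fun m => ?_
  simp only [gam]; nlinarith [sq_nonneg (gam m - 1)]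

lemma gam_half {m : ℕ} (hm : 1 ≤ m) : 1/2 ≤ gam m := by
  have := gam_mono hm
  simpa [gam] using this

lemma newton {s : Finset ι} (hκ : ∀ i ∈ s, 0 ≤ κ i) :
    ∀ i : ℕ, e s (i+2) κ * e s i κ ≤ gam s.card * (e s (i+1) κ) ^ 2 := by
  induction s using Finset.induction with
  | empty =>
    intro i
    rw [e_empty]
    have : (0:ℝ) ≤ gam 0 * (e (∅ : Finset ι) (i+1) κ)^2 :=
      mul_nonneg (gam_nonneg 0) (sq_nonneg _)
    simpa using this
  | @insert b U h ih =>
    intro i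
    have hκU : ∀ i ∈ U, 0 ≤ κ i := fun i hi => hκ i (Finset.mem_insert_of_mem hi)
    have hb : 0 ≤ κ b := hκ b (Finset.mem_insert_self b U)
    have ihU := ih hκU
    have hcard : (insert b U).card = U.card + 1 := Finset.card_insert_of_notMem h
    rw [hcard]
    have hg : gam (U.card + 1) = (1 + gam U.card ^ 2)/2 := rfl
    have hgm : gam U.card ≤ gam (U.card + 1) := gam_mono (Nat.le_succ _)
    have hg0 : 0 ≤ gam U.card := gam_nonneg _
    have hg1 : gam U.card < 1 := gam_lt_one _
    match i with
    | 0 =>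
      rw [e_insert h 1, e_insert h 0, e_zero, e_zero]
      have h0 := ihU 0
      have e1 := e_nonneg hκU 1
      have hghalf : (1:ℝ)/2 ≤ gam (U.card + 1) := gam_half (Nat.le_add_left 1 _)
      rw [e_zero] at h0
      simp only [show (0:ℕ)+2 = 2 from rfl, show (0:ℕ)+1 = 1 from rfl,
        show (1:ℕ)+1 = 2 from rfl] at h0 ⊢
      nlinarith [mul_nonneg (sub_nonneg.2 hgm) (sq_nonneg (e U 1 κ)),
        mul_nonneg (by linarith : (0:ℝ) ≤ 2 * gam (U.card+1) - 1) (mul_nonneg hb e1),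
        mul_nonneg (by linarith : (0:ℝ) ≤ gam (U.card+1)) (sq_nonneg (κ b))]
    | i+1 =>
      rw [e_insert h (i+2), e_insert h (i+1), e_insert h i]
      simp only [show i+1+2 = i+3 from rfl, show i+1+1 = i+2 from rfl,
        show i+2+1 = i+3 from rfl] at *
      have h1 := ihU (i+1)
      simp only [show i+1+2 = i+3 from rfl, show i+1+1 = i+2 from rfl] at h1  -- e U (i+3) * e U (i+1) ≤ γ e U (i+2)^2
      have h2 := ihU i      -- e U (i+2) * e U i ≤ γ e U (i+1)^2
      -- cross term : e U (i+3) * e U i ≤ γ^2 * e U (i+2) * e U (i+1)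
      have hcross : e U (i+3) κ * e U i κ ≤ gam U.card ^2 * (e U (i+2) κ * e U (i+1) κ) := by
        rcases eq_or_lt_of_le (mul_nonneg (e_nonneg hκU (i+2)) (e_nonneg hκU (i+1))) with hz | hp
        · -- e U (i+2) * e U (i+1) = 0
          have := mul_eq_zero.1 hz.symm
          have h3 : e U (i+3) κ * e U i κ = 0 := by
            rcases this with h' | h'
            · rw [e_eq_zero_succ hκU (i+2) h', zero_mul]
            · rw [e_eq_zero_succ hκU (i+2) (e_eq_zero_succ hκU (i+1) h'), zero_mul]
          rw [h3, ← hz, mul_zero]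
        · have key : (e U (i+3) κ * e U i κ) * (e U (i+2) κ * e U (i+1) κ)
              ≤ (gam U.card ^2 * (e U (i+2) κ * e U (i+1) κ)) * (e U (i+2) κ * e U (i+1) κ) := by
            have := mul_le_mul h1 h2 (mul_nonneg (e_nonneg hκU (i+2)) (e_nonneg hκU i))
              (mul_nonneg hg0 (sq_nonneg _))
            nlinarith [e_nonneg hκU i, e_nonneg hκU (i+1), e_nonneg hκU (i+2), e_nonneg hκU (i+3)]
          exact le_of_mul_le_mul_right key hp
      have e_i := e_nonneg hκU i
      have e_i1 := e_nonneg hκU (i+1)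
      have e_i2 := e_nonneg hκU (i+2)
      have e_i3 := e_nonneg hκU (i+3)
      have c0 : e U (i+3) κ * e U (i+1) κ ≤ gam (U.card+1) * e U (i+2) κ^2 :=
        h1.trans (by nlinarith [sq_nonneg (e U (i+2) κ)])
      have step : gam U.card * e U (i+1) κ^2 ≤ gam (U.card+1) * e U (i+1) κ^2 := by
        nlinarith [sq_nonneg (e U (i+1) κ)]
      have c2 : κ b^2 * (e U (i+2) κ * e U i κ) ≤ gam (U.card+1) * (κ b^2 * e U (i+1) κ^2) := by
        nlinarith [mul_le_mul_of_nonneg_left (h2.trans step) (sq_nonneg (κ b))]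
      have c1 : κ b * (e U (i+3) κ * e U i κ + e U (i+2) κ * e U (i+1) κ)
          ≤ (gam U.card^2 + 1) * (κ b * (e U (i+2) κ * e U (i+1) κ)) := by
        have hsum : e U (i+3) κ * e U i κ + e U (i+2) κ * e U (i+1) κ
            ≤ (gam U.card^2 + 1) * (e U (i+2) κ * e U (i+1) κ) := by nlinarith [hcross]
        nlinarith [mul_le_mul_of_nonneg_left hsum hb]
      calc (e U (i+3) κ + κ b * e U (i+2) κ) * (e U (i+1) κ + κ b * e U i κ)
          = e U (i+3) κ * e U (i+1) κ
            + κ b * (e U (i+3) κ * e U i κ + e U (i+2) κ * e U (i+1) κ)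
            + κ b^2 * (e U (i+2) κ * e U i κ) := by ring
        _ ≤ gam (U.card+1) * e U (i+2) κ^2
            + (gam U.card^2 + 1) * (κ b * (e U (i+2) κ * e U (i+1) κ))
            + gam (U.card+1) * (κ b^2 * e U (i+1) κ^2) := by linarith
        _ = gam (U.card+1) * (e U (i+2) κ + κ b * e U (i+1) κ)^2 := by rw [hg]; ring


lemma claimA : ∀ (j : ℕ) (s : Finset ι) (κ : ι → ℝ), (∀ i ∈ s, 0 < κ i) → j + 1 ≤ s.card →
    e s (j+1) κ * e s j κ ≤ (s.card : ℝ)^j * ∑ a ∈ s, κ a * (e (s.erase a) j κ)^2 := by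
  intro j
  induction j with
  | zero =>
    intro s κ hκ hj
    have : ∑ a ∈ s, κ a * (e (s.erase a) 0 κ)^2 = ∑ a ∈ s, κ a := by
      refine Finset.sum_congr rfl fun a ha => by rw [e_zero]; ring
    rw [this, e_zero, pow_zero, one_mul, mul_one, e_one]
  | succ j ihj =>
    intro s κ hκ hj
    have hκ0 : ∀ i ∈ s, 0 ≤ κ i := fun i hi => (hκ i hi).le
    have hsne : s.Nonempty := Finset.card_pos.1 (by omega)
    obtain ⟨b, hb, hbmax⟩ := Finset.exists_max_image s κ hsne
    set V := s.erase b with hV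
    have hbV : b ∉ V := Finset.notMem_erase b s
    have hins : insert b V = s := Finset.insert_erase hb
    have hVcard : V.card = s.card - 1 := Finset.card_erase_of_mem hb
    have hVcard' : V.card + 1 = s.card := by
      have := Finset.card_pos.2 hsne; omega
    have hκV : ∀ i ∈ V, 0 < κ i := fun i hi => hκ i (Finset.mem_of_mem_erase hi)
    have hκV0 : ∀ i ∈ V, 0 ≤ κ i := fun i hi => (hκV i hi).le
    have hbpos : 0 < κ b := hκ b hb
    have hjV : j + 1 ≤ V.card := by omega
    -- (1) (j+2) * e V (j+2) ≤ (V.card) * (κ b * e V (j+1))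
    have step1 : ((j:ℝ)+2) * e V (j+2) κ = ∑ a ∈ V, κ a * e (V.erase a) (j+1) κ := by
      rw [sum_kappa_erase V (j+1)]; push_cast; ring
    have step1' : ((j:ℝ)+2) * e V (j+2) κ ≤ (V.card : ℝ) * (κ b * e V (j+1) κ) := by
      rw [step1]
      calc ∑ a ∈ V, κ a * e (V.erase a) (j+1) κ
          ≤ ∑ a ∈ V, κ b * e V (j+1) κ := by
            refine Finset.sum_le_sum fun a ha => ?_
            exact mul_le_mul (hbmax a (Finset.mem_of_mem_erase ha))
              (e_mono_subset (Finset.erase_subset a V) hκV0 (j+1))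
              (e_nonneg (fun i hi => hκV0 i (Finset.mem_of_mem_erase hi)) (j+1)) hbpos.le
        _ = (V.card : ℝ) * (κ b * e V (j+1) κ) := by
            rw [Finset.sum_const, nsmul_eq_mul]
    have eV2nn := e_nonneg hκV0 (j+2)
    have eV1nn := e_nonneg hκV0 (j+1)
    have eVjnn := e_nonneg hκV0 j
    have step2 : e V (j+2) κ ≤ (V.card : ℝ) * (κ b * e V (j+1) κ) := by
      have h1 : e V (j+2) κ ≤ ((j:ℝ)+2) * e V (j+2) κ := by nlinarith
      linarith
    have es2 : e s (j+2) κ = e V (j+2) κ + κ b * e V (j+1) κ := by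
      rw [← hins, e_insert hbV (j+1)]
    have es1 : e s (j+1) κ = e V (j+1) κ + κ b * e V j κ := by
      rw [← hins, e_insert hbV j]
    have hup : e s (j+2) κ ≤ (s.card : ℝ) * (κ b * e V (j+1) κ) := by
      rw [es2, ← hVcard']
      push_cast
      nlinarith [mul_nonneg hbpos.le eV1nn]
    -- IH on V
    have ihV := ihj V κ hκV hjV
    -- lower bound for the sum
    have key : ∀ a ∈ V, κ b * e (V.erase a) j κ ≤ e (s.erase a) (j+1) κ := by
      intro a ha
      have hab : a ≠ b := fun h => hbV (h ▸ ha)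
      have hsa : s.erase a = insert b (V.erase a) := by
        rw [hV, Finset.erase_right_comm, Finset.insert_erase
          (Finset.mem_erase.2 ⟨Ne.symm hab, hb⟩)]
      rw [hsa, e_insert (fun hbe => hbV (Finset.mem_of_mem_erase hbe)) j]
      have hnn : 0 ≤ e (V.erase a) (j+1) κ :=
        e_nonneg (fun i hi => hκV0 i (Finset.mem_of_mem_erase hi)) (j+1)
      linarith
    have sumlow : κ b * (e V (j+1) κ)^2 + κ b^2 * (∑ a ∈ V, κ a * (e (V.erase a) j κ)^2)
        ≤ ∑ a ∈ s, κ a * (e (s.erase a) (j+1) κ)^2 := by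
      rw [← hins, Finset.sum_insert hbV, Finset.erase_insert hbV, Finset.mul_sum]
      have hterm : ∀ a ∈ V, κ b^2 * (κ a * (e (V.erase a) j κ)^2)
          ≤ κ a * (e ((insert b V).erase a) (j+1) κ)^2 := by
        intro a ha
        have h1 := key a ha
        rw [hins]
        have hnn : 0 ≤ κ b * e (V.erase a) j κ :=
          mul_nonneg hbpos.le (e_nonneg (fun i hi => hκV0 i (Finset.mem_of_mem_erase hi)) j)
        have h2 : (κ b * e (V.erase a) j κ)^2 ≤ (e (s.erase a) (j+1) κ)^2 := by nlinarith
        calc κ b^2 * (κ a * (e (V.erase a) j κ)^2) = κ a * (κ b * e (V.erase a) j κ)^2 := by ring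
          _ ≤ κ a * (e (s.erase a) (j+1) κ)^2 := by
              have := (hκV a ha).le; nlinarith
      have hs := Finset.sum_le_sum hterm
      rw [hins] at hs ⊢
      linarith
    -- assemble
    have h1V : (1:ℝ) ≤ (V.card : ℝ) := by exact_mod_cast (by omega : 1 ≤ V.card)
    have hVles : (V.card : ℝ) ≤ (s.card : ℝ) := by
      exact_mod_cast (by omega : V.card ≤ s.card)
    have hscard1 : (1:ℝ) ≤ (s.card : ℝ) := le_trans h1V hVles
    have hpow1 : (1:ℝ) ≤ (s.card : ℝ)^j := one_le_pow₀ hscard1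
    have sumnnV : 0 ≤ ∑ a ∈ V, κ a * (e (V.erase a) j κ)^2 :=
      Finset.sum_nonneg fun a ha => mul_nonneg (hκV a ha).le (sq_nonneg _)
    have sumnnS : 0 ≤ ∑ a ∈ s, κ a * (e (s.erase a) (j+1) κ)^2 :=
      Finset.sum_nonneg fun a ha => mul_nonneg (hκ a ha).le (sq_nonneg _)
    have hVj : (V.card:ℝ)^j ≤ (s.card:ℝ)^j := pow_le_pow_left₀ (by linarith) hVles j
    calc e s (j+2) κ * e s (j+1) κ
        ≤ ((s.card : ℝ) * (κ b * e V (j+1) κ)) * (e V (j+1) κ + κ b * e V j κ) := by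
          rw [es1]
          exact mul_le_mul_of_nonneg_right hup
            (add_nonneg eV1nn (mul_nonneg hbpos.le eVjnn))
      _ = (s.card : ℝ) * (κ b * (e V (j+1) κ)^2)
          + (s.card : ℝ) * (κ b^2 * (e V (j+1) κ * e V j κ)) := by ring
      _ ≤ (s.card : ℝ) * (κ b * (e V (j+1) κ)^2)
          + (s.card : ℝ) * (κ b^2 * ((V.card:ℝ)^j * ∑ a ∈ V, κ a * (e (V.erase a) j κ)^2)) := by
          have h2 : κ b^2 * (e V (j+1) κ * e V j κ)
              ≤ κ b^2 * ((V.card:ℝ)^j * ∑ a ∈ V, κ a * (e (V.erase a) j κ)^2) :=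
            mul_le_mul_of_nonneg_left ihV (sq_nonneg (κ b))
          have h3 := mul_le_mul_of_nonneg_left h2 (le_trans zero_le_one hscard1)
          linarith
      _ ≤ (s.card:ℝ)^(j+1) * ∑ a ∈ s, κ a * (e (s.erase a) (j+1) κ)^2 := by
          have base : κ b * (e V (j+1) κ)^2
              + κ b^2 * ((V.card:ℝ)^j * ∑ a ∈ V, κ a * (e (V.erase a) j κ)^2)
              ≤ (s.card:ℝ)^j * (∑ a ∈ s, κ a * (e (s.erase a) (j+1) κ)^2) := by
            have h1 : κ b * (e V (j+1) κ)^2 ≤ (s.card:ℝ)^j * (κ b * (e V (j+1) κ)^2) := by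
              have := mul_le_mul_of_nonneg_right hpow1
                (mul_nonneg hbpos.le (sq_nonneg (e V (j+1) κ)))
              linarith
            have h2 : κ b^2 * ((V.card:ℝ)^j * ∑ a ∈ V, κ a * (e (V.erase a) j κ)^2)
                ≤ (s.card:ℝ)^j * (κ b^2 * ∑ a ∈ V, κ a * (e (V.erase a) j κ)^2) := by
              have := mul_le_mul_of_nonneg_right hVj (mul_nonneg (sq_nonneg (κ b)) sumnnV)
              nlinarith [this]
            have h3 := mul_le_mul_of_nonneg_left sumlow (le_trans zero_le_one hpow1)
            nlinarith [h1, h2, h3]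
          have hfin := mul_le_mul_of_nonneg_left base (le_trans zero_le_one hscard1)
          calc (s.card : ℝ) * (κ b * (e V (j+1) κ)^2)
                + (s.card:ℝ) * (κ b^2 * ((V.card:ℝ)^j * ∑ a ∈ V, κ a * (e (V.erase a) j κ)^2))
              = (s.card:ℝ) * (κ b * (e V (j+1) κ)^2
                + κ b^2 * ((V.card:ℝ)^j * ∑ a ∈ V, κ a * (e (V.erase a) j κ)^2)) := by ring
            _ ≤ (s.card:ℝ) * ((s.card:ℝ)^j * (∑ a ∈ s, κ a * (e (s.erase a) (j+1) κ)^2)) := hfin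
            _ = (s.card:ℝ)^(j+1) * ∑ a ∈ s, κ a * (e (s.erase a) (j+1) κ)^2 := by ring


/-- there is an element whose erase keeps a positive fraction of `e`. -/
lemma part2 {s : Finset ι} {κ : ι → ℝ} (hκ : ∀ i ∈ s, 0 < κ i) {j : ℕ}
    (hj : j + 1 ≤ s.card) {b : ℝ} (hb : 0 ≤ b) (hbκ : ∀ a ∈ s, b ≤ κ a) :
    b * (e s j κ)^2 ≤ (s.card : ℝ)^2 * ∑ a ∈ s, κ a * (e (s.erase a) j κ)^2 := by
  have hκ0 : ∀ i ∈ s, 0 ≤ κ i := fun i hi => (hκ i hi).le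
  have hsne : s.Nonempty := Finset.card_pos.1 (by omega)
  obtain ⟨a, ha, hamax⟩ := Finset.exists_max_image s (fun a => e (s.erase a) j κ) hsne
  have hsum := sum_erase (κ := κ) s j
  have hcard1 : (1:ℝ) ≤ (s.card:ℝ) := by exact_mod_cast (by omega : 1 ≤ s.card)
  have hcardj : (1:ℝ) ≤ (s.card:ℝ) - j := by
    have : (j:ℝ) + 1 ≤ (s.card:ℝ) := by exact_mod_cast hj
    linarith
  have hesnn : 0 ≤ e s j κ := e_nonneg hκ0 j
  have heann : 0 ≤ e (s.erase a) j κ :=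
    e_nonneg (fun i hi => hκ0 i (Finset.mem_of_mem_erase hi)) j
  -- e s j ≤ s.card * e (s.erase a) j
  have hmax : e s j κ ≤ (s.card:ℝ) * e (s.erase a) j κ := by
    have h1 : ∑ c ∈ s, e (s.erase c) j κ ≤ ∑ c ∈ s, e (s.erase a) j κ :=
      Finset.sum_le_sum fun c hc => hamax c hc
    rw [hsum, Finset.sum_const, nsmul_eq_mul] at h1
    nlinarith
  have hterm : b * (e (s.erase a) j κ)^2 ≤ ∑ c ∈ s, κ c * (e (s.erase c) j κ)^2 := by
    have h0 : b * (e (s.erase a) j κ)^2 ≤ κ a * (e (s.erase a) j κ)^2 :=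
      mul_le_mul_of_nonneg_right (hbκ a ha) (sq_nonneg _)
    have h1 : κ a * (e (s.erase a) j κ)^2 ≤ ∑ c ∈ s, κ c * (e (s.erase c) j κ)^2 :=
      Finset.single_le_sum (f := fun c => κ c * (e (s.erase c) j κ)^2)
        (fun c hc => mul_nonneg (hκ c hc).le (sq_nonneg _)) ha
    linarith
  have hsq : (e s j κ)^2 ≤ (s.card:ℝ)^2 * (e (s.erase a) j κ)^2 := by nlinarith
  calc b * (e s j κ)^2 ≤ b * ((s.card:ℝ)^2 * (e (s.erase a) j κ)^2) :=
        mul_le_mul_of_nonneg_left hsq hb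
    _ = (s.card:ℝ)^2 * (b * (e (s.erase a) j κ)^2) := by ring
    _ ≤ (s.card:ℝ)^2 * ∑ c ∈ s, κ c * (e (s.erase c) j κ)^2 :=
        mul_le_mul_of_nonneg_left hterm (by positivity)

end SAux

namespace SAux

lemma sigmaE_natCast (s : Finset ι) (j : ℕ) (κ : ι → ℝ) :
    sigmaE s (j : ℤ) κ = e s j κ := by
  rw [sigmaE, if_pos (Int.natCast_nonneg j), Int.toNat_natCast]; rfl

lemma sigmaE_neg {s : Finset ι} {jz : ℤ} (h : jz < 0) (κ : ι → ℝ) : sigmaE s jz κ = 0 :=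
  if_neg (not_le.2 h)

lemma W_ge {U : Finset ι} {κ : ι → ℝ} (hκ : ∀ i ∈ U, 0 ≤ κ i) (j : ℕ) :
    (1 - gam U.card) * (e U j κ)^2
      ≤ (sigmaE U (((j:ℤ)+1)-1) κ)^2 - sigmaE U ((j:ℤ)+1) κ * sigmaE U (((j:ℤ)+1)-2) κ := by
  have h1 : (((j:ℤ)+1)-1) = (j:ℤ) := by ring
  rw [h1, sigmaE_natCast]
  have hg0 := gam_nonneg U.card
  cases j with
  | zero =>
    have h4 : (((0:ℕ):ℤ)+1)-2 = (-1 : ℤ) := by norm_num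
    rw [h4, sigmaE_neg (show (-1:ℤ) < 0 by norm_num) κ, e_zero]
    nlinarith [hg0]
  | succ i =>
    have h2 : (((i+1:ℕ):ℤ)+1) = ((i+2 : ℕ):ℤ) := by push_cast; ring
    have h3 : (((i+1:ℕ):ℤ)+1)-2 = ((i:ℕ):ℤ) := by push_cast; ring
    rw [h3, h2, sigmaE_natCast, sigmaE_natCast]
    have hn := newton hκ i
    nlinarith [sq_nonneg (e U (i+1) κ)]

end SAux

/-- Case 2 estimate, (2.20)–(2.22): there is `c'_{n,k} > 0` depending
only on `n, k` such that for every `δ₀ ∈ (0,1)`, every `λ₁ ≥ ⋯ ≥ λ_n > 0` (with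
`κ_α = 1/λ_α`) and every `ξ ∈ ℝⁿ` with `|ξ_α/λ_α| < δ₀ |ξ₁/λ₁|` for all `α ≥ 2`:
`(1/(2σ_k(κ))) Σ_{α≠β} (σ_{k-1}(κ|αβ)² - σ_k(κ|αβ)σ_{k-2}(κ|αβ)) κ_ακ_β (κ_αξ_α-κ_βξ_β)²
 ≥ c'_{n,k} (1-δ₀)² σ_{k-1}(κ|1) κ₁³ ξ₁²`. -/
theorem stmt_12 (n k : ℕ) (hn : 2 ≤ n) (hk1 : 1 ≤ k) (hk2 : k ≤ n - 1) :
    ∃ c' : ℝ, 0 < c' ∧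
      ∀ δ₀ : ℝ, 0 < δ₀ → δ₀ < 1 →
      ∀ lam : Fin n → ℝ, (∀ α, 0 < lam α) → (∀ α β : Fin n, α ≤ β → lam β ≤ lam α) →
      ∀ ξ : Fin n → ℝ,
        let i0 : Fin n := ⟨0, by omega⟩
        let κ : Fin n → ℝ := fun α => (lam α)⁻¹
        (∀ α : Fin n, α ≠ i0 → |ξ α / lam α| < δ₀ * |ξ i0 / lam i0|) →
        (1 / (2 * sigmaV (k : ℤ) κ)) *
            ∑ α, ∑ β ∈ Finset.univ.erase α,
              ((sigmaV2 ((k : ℤ) - 1) κ α β) ^ 2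
                  - sigmaV2 (k : ℤ) κ α β * sigmaV2 ((k : ℤ) - 2) κ α β) *
                κ α * κ β * (κ α * ξ α - κ β * ξ β) ^ 2
          ≥ c' * (1 - δ₀) ^ 2 * sigmaV1 ((k : ℤ) - 1) κ i0 * (κ i0) ^ 3 * (ξ i0) ^ 2 := by
  classical
  obtain ⟨j, rfl⟩ : ∃ j, k = j + 1 := ⟨k - 1, by omega⟩
  have hjn : j + 2 ≤ n := by omega
  set γ : ℝ := SAux.gam (n-2) with hγ
  have hγ0 : 0 ≤ γ := SAux.gam_nonneg _
  have hγ1 : γ < 1 := SAux.gam_lt_one _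
  have hn1 : (1:ℝ) ≤ ((n-1:ℕ):ℝ) := by exact_mod_cast (by omega : 1 ≤ n - 1)
  set Cq : ℝ := ((n-1:ℕ):ℝ)^j + ((n-1:ℕ):ℝ)^2 with hCq
  have hCqpos : 0 < Cq := by positivity
  refine ⟨(1 - γ) / (2 * Cq), div_pos (by linarith) (by positivity), ?_⟩
  intro δ₀ hδ0 hδ1 lam hlam hmono ξ i0 κ hξ
  have κpos : ∀ α, 0 < κ α := fun α => inv_pos.2 (hlam α)
  have κnn : ∀ α, 0 ≤ κ α := fun α => (κpos α).le
  have hκmin : ∀ α, κ i0 ≤ κ α := by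
    intro α
    have h0 : i0 ≤ α := by
      simp only [Fin.le_def]
      exact Nat.zero_le _
    exact inv_anti₀ (hlam α) (hmono i0 α h0)
  set S : Finset (Fin n) := Finset.univ.erase i0 with hS
  have hi0S : i0 ∉ S := Finset.notMem_erase _ _
  have hinsS : insert i0 S = Finset.univ := Finset.insert_erase (Finset.mem_univ i0)
  have hScard : S.card = n - 1 := by
    rw [hS, Finset.card_erase_of_mem (Finset.mem_univ _), Finset.card_univ, Fintype.card_fin]
  have hScardR : (S.card : ℝ) = ((n-1:ℕ):ℝ) := by rw [hScard]
  have hUcard : ∀ α β : Fin n, β ∈ Finset.univ.erase α →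
      ((Finset.univ.erase α).erase β).card = n - 2 := by
    intro α β hβ
    rw [Finset.card_erase_of_mem hβ, Finset.card_erase_of_mem (Finset.mem_univ α),
      Finset.card_univ, Fintype.card_fin]
    omega
  -- lower bound on the Newton factor
  have hWnn : ∀ α β, β ∈ Finset.univ.erase α →
      (1-γ) * (SAux.e ((Finset.univ.erase α).erase β) j κ)^2
        ≤ (sigmaV2 ((↑(j+1):ℤ) - 1) κ α β)^2
          - sigmaV2 (↑(j+1):ℤ) κ α β * sigmaV2 ((↑(j+1):ℤ) - 2) κ α β := by
    intro α β hβ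
    have h := SAux.W_ge (U := (Finset.univ.erase α).erase β) (κ := κ) (fun i _ => κnn i) j
    rw [hUcard α β hβ] at h
    have hcast : ((j:ℤ)+1) = (↑(j+1):ℤ) := by push_cast; ring
    rw [hcast] at h
    simpa only [sigmaV2, hγ] using h
  -- the summand
  set g : Fin n → Fin n → ℝ := fun α β =>
    ((sigmaV2 ((↑(j+1):ℤ) - 1) κ α β)^2
      - sigmaV2 (↑(j+1):ℤ) κ α β * sigmaV2 ((↑(j+1):ℤ) - 2) κ α β)
      * κ α * κ β * (κ α * ξ α - κ β * ξ β)^2 with hg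
  have hgnn : ∀ α β, β ∈ Finset.univ.erase α → 0 ≤ g α β := by
    intro α β hβ
    have h1 := hWnn α β hβ
    have h2 : 0 ≤ (1-γ) * (SAux.e ((Finset.univ.erase α).erase β) j κ)^2 :=
      mul_nonneg (by linarith) (sq_nonneg _)
    have h3 := le_trans h2 h1
    exact mul_nonneg (mul_nonneg (mul_nonneg h3 (κnn α)) (κnn β)) (sq_nonneg _)
  -- angle estimate
  have hangle : ∀ α, α ≠ i0 →
      (1-δ₀)^2 * (κ i0 * ξ i0)^2 ≤ (κ α * ξ α - κ i0 * ξ i0)^2 := by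
    intro α hα
    have h := hξ α hα
    have hconv : ∀ β : Fin n, ξ β / lam β = κ β * ξ β := fun β => by
      show ξ β / lam β = (lam β)⁻¹ * ξ β
      rw [div_eq_mul_inv, mul_comm]
    rw [hconv, hconv] at h
    have h1 : |κ α * ξ α| ≤ δ₀ * |κ i0 * ξ i0| := h.le
    have h2 : |κ i0 * ξ i0| - |κ α * ξ α| ≤ |κ α * ξ α - κ i0 * ξ i0| := by
      have := abs_sub_abs_le_abs_sub (κ i0 * ξ i0) (κ α * ξ α)
      rw [abs_sub_comm] at this
      exact this
    have h3 : (1-δ₀) * |κ i0 * ξ i0| ≤ |κ α * ξ α - κ i0 * ξ i0| := by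
      nlinarith [abs_nonneg (κ i0 * ξ i0)]
    have h4 : 0 ≤ (1-δ₀) * |κ i0 * ξ i0| := by
      have := abs_nonneg (κ i0 * ξ i0); nlinarith
    have h5 : ((1-δ₀) * |κ i0 * ξ i0|)^2 ≤ (|κ α * ξ α - κ i0 * ξ i0|)^2 := by
      nlinarith [h3, h4, abs_nonneg (κ α * ξ α - κ i0 * ξ i0)]
    calc (1-δ₀)^2 * (κ i0 * ξ i0)^2 = ((1-δ₀) * |κ i0 * ξ i0|)^2 := by
          rw [show ((1-δ₀) * |κ i0 * ξ i0|)^2 = (1-δ₀)^2 * |κ i0 * ξ i0|^2 from mul_pow _ _ 2,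
            sq_abs]
      _ ≤ (|κ α * ξ α - κ i0 * ξ i0|)^2 := h5
      _ = (κ α * ξ α - κ i0 * ξ i0)^2 := sq_abs _
  -- restrict double sum to β = i0
  have hD1 : ∑ α ∈ S, g α i0 ≤ ∑ α, ∑ β ∈ Finset.univ.erase α, g α β := by
    have hsplit := Finset.sum_insert (f := fun α => ∑ β ∈ Finset.univ.erase α, g α β) hi0S
    rw [hinsS] at hsplit
    rw [hsplit]
    have t1 : 0 ≤ ∑ β ∈ Finset.univ.erase i0, g i0 β :=
      Finset.sum_nonneg fun β hβ => hgnn i0 β hβ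
    have t2 : ∑ α ∈ S, g α i0 ≤ ∑ α ∈ S, ∑ β ∈ Finset.univ.erase α, g α β := by
      refine Finset.sum_le_sum fun α hα => ?_
      have hα0 : α ≠ i0 := (Finset.mem_erase.1 hα).1
      exact Finset.single_le_sum (f := fun β => g α β) (fun β hβ => hgnn α β hβ)
        (Finset.mem_erase.2 ⟨Ne.symm hα0, Finset.mem_univ _⟩)
    linarith
  -- per-term lower bound for β = i0
  set P : ℝ := (1-δ₀)^2 * ((κ i0)^3 * (ξ i0)^2) with hP
  have hPnn : 0 ≤ P := by
    rw [hP]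
    exact mul_nonneg (sq_nonneg _) (mul_nonneg (pow_nonneg (κnn i0) 3) (sq_nonneg _))
  have hterm : ∀ α ∈ S, (1-γ) * P * (κ α * (SAux.e (S.erase α) j κ)^2) ≤ g α i0 := by
    intro α hα
    have hα0 : α ≠ i0 := (Finset.mem_erase.1 hα).1
    have hi0mem : i0 ∈ Finset.univ.erase α :=
      Finset.mem_erase.2 ⟨Ne.symm hα0, Finset.mem_univ _⟩
    have hW := hWnn α i0 hi0mem
    have hereq : (Finset.univ.erase α).erase i0 = S.erase α := by
      rw [hS, Finset.erase_right_comm]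
    rw [hereq] at hW
    have hang := hangle α hα0
    set A := SAux.e (S.erase α) j κ with hA
    set W := (sigmaV2 ((↑(j+1):ℤ) - 1) κ α i0)^2
      - sigmaV2 (↑(j+1):ℤ) κ α i0 * sigmaV2 ((↑(j+1):ℤ) - 2) κ α i0 with hWd
    have hWnn' : 0 ≤ W :=
      le_trans (mul_nonneg (by linarith : (0:ℝ) ≤ 1-γ) (sq_nonneg _)) hW
    calc (1-γ) * P * (κ α * A^2)
        = ((1-γ) * A^2) * κ α * κ i0 * ((1-δ₀)^2 * (κ i0 * ξ i0)^2) := by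
          rw [hP]; ring
      _ ≤ W * κ α * κ i0 * ((1-δ₀)^2 * (κ i0 * ξ i0)^2) := by
          have := mul_le_mul_of_nonneg_right
            (mul_le_mul_of_nonneg_right (mul_le_mul_of_nonneg_right hW (κnn α)) (κnn i0))
            (mul_nonneg (sq_nonneg _) (sq_nonneg _) : (0:ℝ) ≤ (1-δ₀)^2 * (κ i0 * ξ i0)^2)
          exact this
      _ ≤ W * κ α * κ i0 * (κ α * ξ α - κ i0 * ξ i0)^2 := by
          exact mul_le_mul_of_nonneg_left hang
            (mul_nonneg (mul_nonneg hWnn' (κnn α)) (κnn i0))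
      _ = g α i0 := by rw [hg]
  set Q : ℝ := ∑ α ∈ S, κ α * (SAux.e (S.erase α) j κ)^2 with hQ
  have hQnn : 0 ≤ Q :=
    Finset.sum_nonneg fun α hα => mul_nonneg (κnn α) (sq_nonneg _)
  have hsum : (1-γ) * P * Q ≤ ∑ α ∈ S, g α i0 := by
    rw [hQ, Finset.mul_sum]
    exact Finset.sum_le_sum hterm
  -- upper bound for σ_k e(S,j)
  have hQclaim := SAux.claimA j S κ (fun i _ => κpos i) (by omega)
  rw [hScardR] at hQclaim
  have hQpart2 := SAux.part2 (s := S) (κ := κ) (fun i _ => κpos i) (j := j)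
    (by omega) (κnn i0) (fun a _ => hκmin a)
  rw [hScardR] at hQpart2
  have hσeq : sigmaV (↑(j+1):ℤ) κ = SAux.e Finset.univ (j+1) κ := by
    rw [sigmaV, SAux.sigmaE_natCast]
  have hσsplit : SAux.e Finset.univ (j+1) κ = SAux.e S (j+1) κ + κ i0 * SAux.e S j κ := by
    rw [← hinsS, SAux.e_insert hi0S j]
  have hσpos : 0 < SAux.e Finset.univ (j+1) κ :=
    SAux.e_pos (fun i _ => κpos i) (by rw [Finset.card_univ, Fintype.card_fin]; omega)
  have hsig1 : sigmaV1 ((↑(j+1):ℤ)-1) κ i0 = SAux.e S j κ := by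
    rw [sigmaV1, show ((↑(j+1):ℤ)-1) = (j:ℤ) by push_cast; ring, SAux.sigmaE_natCast]
  have heSjnn : 0 ≤ SAux.e S j κ := SAux.e_nonneg (fun i _ => κnn i) j
  have hkey : SAux.e Finset.univ (j+1) κ * SAux.e S j κ ≤ Cq * Q := by
    rw [hσsplit, hCq]
    nlinarith [hQclaim, hQpart2]
  -- final assembly
  rw [ge_iff_le, hσeq, hsig1]
  set σ := SAux.e Finset.univ (j+1) κ with hσd
  have h2σ : 0 < 2 * σ := by linarith
  rw [one_div_mul_eq_div, le_div_iff₀ h2σ]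
  have hDlow : (1-γ) * P * Q ≤ ∑ α, ∑ β ∈ Finset.univ.erase α, g α β :=
    le_trans hsum hD1
  have hchain : (1-γ) * P * (σ * SAux.e S j κ) ≤ (1-γ) * P * (Cq * Q) :=
    mul_le_mul_of_nonneg_left hkey (mul_nonneg (by linarith) hPnn)
  have hXid : ((1-γ)/(2*Cq) * (1 - δ₀)^2 * SAux.e S j κ * (κ i0)^3 * (ξ i0)^2) * (2*σ) * Cq
      = (1-γ) * P * (σ * SAux.e S j κ) := by
    rw [hP]; field_simp
  have hstep : ((1-γ)/(2*Cq) * (1 - δ₀)^2 * SAux.e S j κ * (κ i0)^3 * (ξ i0)^2) * (2*σ) * Cq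
      ≤ ((1-γ) * P * Q) * Cq := by
    rw [hXid]
    nlinarith [hchain]
  have hfin : ((1-γ)/(2*Cq) * (1 - δ₀)^2 * SAux.e S j κ * (κ i0)^3 * (ξ i0)^2) * (2*σ)
      ≤ (1-γ) * P * Q := le_of_mul_le_mul_right hstep hCqpos
  calc (1-γ)/(2*Cq) * (1 - δ₀)^2 * SAux.e S j κ * (κ i0)^3 * (ξ i0)^2 * (2*σ)
      ≤ (1-γ) * P * Q := hfin
    _ ≤ ∑ α, ∑ β ∈ Finset.univ.erase α, g α β := hDlow
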